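/- Let S = {(0,0),(0,1),(2,0),(2,1),(2,2),(3,0),(3,1),(3,2)}, q1 = (123, S), q2 = (132, S). Then for every n ≥ 2 and all k, ℓ ≥ 0, the number of π ∈ S_n with occ(q1,π)=k and occ(q2,π)=ℓ equals 2·(n−1)! if k = ℓ = 0, and equals binom(k+ℓ, k) · Σ_{i=2}^{n−1} binom(n−1, i) · (n−1−i)! · c(i−1, k+ℓ) if (k,ℓ) ≠ (0,0), where binom denotes the binomial coefficient and c the unsigned Stirling numbers of the first kind; in particular, q1 and q2 are jointly equidistributed. -/

import Mathlib

/-- The boundary-extended sequence of positions of a candidate occurrence: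
`posExt i 0 = 0`, `posExt i a = i (a-1) + 1` (1-based position) for `1 ≤ a ≤ m`,
and `posExt i (m+1) = n + 1`. -/
def posExt {m n : ℕ} (i : Fin m → Fin n) : ℕ → ℕ := fun a =>
  if h : 1 ≤ a ∧ a ≤ m then ((i ⟨a - 1, by omega⟩ : Fin n) : ℕ) + 1
  else if a = 0 then 0 else n + 1

/-- The boundary-extended increasing rearrangement of the values of a candidate
occurrence: `valExt τ π i 0 = 0`, `valExt τ π i b = π (i (τ⁻¹ (b-1))) + 1`
(the `b`-th smallest value, 1-based) for `1 ≤ b ≤ m`, and `valExt τ π i (m+1) = n + 1`. -/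
def valExt {m n : ℕ} (τ : Equiv.Perm (Fin m)) (π : Equiv.Perm (Fin n))
    (i : Fin m → Fin n) : ℕ → ℕ := fun b =>
  if h : 1 ≤ b ∧ b ≤ m then ((π (i (τ.symm ⟨b - 1, by omega⟩)) : Fin n) : ℕ) + 1
  else if b = 0 then 0 else n + 1

/-- `i : Fin m → Fin n` is an occurrence of the mesh pattern `(τ, R)` in the
permutation `π` of `{1, …, n}` (positions and values are taken 1-based via `+1`). -/
def IsMeshOcc {m n : ℕ} (τ : Equiv.Perm (Fin m)) (R : Set (ℕ × ℕ))
    (π : Equiv.Perm (Fin n)) (i : Fin m → Fin n) : Prop :=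
  StrictMono i ∧
  (∀ a b : Fin m, π (i a) < π (i b) ↔ τ a < τ b) ∧
  ∀ a b : ℕ, (a, b) ∈ R →
    ¬ ∃ j : Fin n,
        posExt i a < (j : ℕ) + 1 ∧ (j : ℕ) + 1 < posExt i (a + 1) ∧
        valExt τ π i b < ((π j : Fin n) : ℕ) + 1 ∧
        ((π j : Fin n) : ℕ) + 1 < valExt τ π i (b + 1)

/-- The number of occurrences of the mesh pattern `(τ, R)` in `π`. -/
noncomputable def occ {m n : ℕ} (τ : Equiv.Perm (Fin m)) (R : Set (ℕ × ℕ))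
    (π : Equiv.Perm (Fin n)) : ℕ :=
  Nat.card {i : Fin m → Fin n // IsMeshOcc τ R π i}

/-- Mesh patterns `(τ₁, R₁)` and `(τ₂, R₂)` are jointly equidistributed. -/
def JointlyEquidistributed {m₁ m₂ : ℕ} (τ₁ : Equiv.Perm (Fin m₁)) (R₁ : Set (ℕ × ℕ))
    (τ₂ : Equiv.Perm (Fin m₂)) (R₂ : Set (ℕ × ℕ)) : Prop :=
  ∀ n k ℓ : ℕ,
    Nat.card {π : Equiv.Perm (Fin n) // occ τ₁ R₁ π = k ∧ occ τ₂ R₂ π = ℓ} =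
    Nat.card {π : Equiv.Perm (Fin n) // occ τ₁ R₁ π = ℓ ∧ occ τ₂ R₂ π = k}

/-- The pattern 123 (identity on three letters). -/
def perm123 : Equiv.Perm (Fin 3) := 1

/-- The pattern 132 (0-indexed: `0 ↦ 0`, `1 ↦ 2`, `2 ↦ 1`). -/
def perm132 : Equiv.Perm (Fin 3) := Equiv.swap 1 2

/-- The pattern 12 (identity on two letters). -/
def perm12 : Equiv.Perm (Fin 2) := 1

/-- The pattern 21. -/
def perm21 : Equiv.Perm (Fin 2) := Equiv.swap 0 1

/-- The unsigned Stirling numbers of the first kind. -/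
def stirlingFirst : ℕ → ℕ → ℕ
  | 0, 0 => 1
  | 0, _ + 1 => 0
  | _ + 1, 0 => 0
  | n + 1, k + 1 => n * stirlingFirst n (k + 1) + stirlingFirst n k


open Finset

section Stats

variable {n : ℕ}

/-- number of later, smaller entries (Lehmer code entry). -/
def cnt (π : Equiv.Perm (Fin n)) (p : Fin n) : ℕ :=
  (univ.filter (fun j => p < j ∧ π j < π p)).card

def pA (π : Equiv.Perm (Fin n)) (p : Fin n) : Prop :=
  (p : ℕ) + 1 < n ∧ cnt π p = 0 ∧ ∃ j, j < p ∧ (π j : ℕ) = 0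

def pB (π : Equiv.Perm (Fin n)) (p : Fin n) : Prop :=
  cnt π p = 1 ∧ ∃ j, j < p ∧ (π j : ℕ) = 0

instance (π : Equiv.Perm (Fin n)) : DecidablePred (pA π) := fun _ => by
  unfold pA; infer_instance

instance (π : Equiv.Perm (Fin n)) : DecidablePred (pB π) := fun _ => by
  unfold pB; infer_instance

def statA (π : Equiv.Perm (Fin n)) : ℕ := (univ.filter (pA π)).card
def statB (π : Equiv.Perm (Fin n)) : ℕ := (univ.filter (pB π)).card

def pA0 (π : Equiv.Perm (Fin n)) (p : Fin n) : Prop := (p : ℕ) + 1 < n ∧ cnt π p = 0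
def pB0 (π : Equiv.Perm (Fin n)) (p : Fin n) : Prop := cnt π p = 1

instance (π : Equiv.Perm (Fin n)) : DecidablePred (pA0 π) := fun _ => by
  unfold pA0; infer_instance
instance (π : Equiv.Perm (Fin n)) : DecidablePred (pB0 π) := fun _ => by
  unfold pB0; infer_instance

def statA0 (π : Equiv.Perm (Fin n)) : ℕ := (univ.filter (pA0 π)).card
def statB0 (π : Equiv.Perm (Fin n)) : ℕ := (univ.filter (pB0 π)).card

/-- prepend a value `v` to (the order pattern of) `σ`. -/
def consFun (v : Fin (n + 1)) (σ : Equiv.Perm (Fin n)) : Fin (n + 1) → Fin (n + 1) :=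
  fun j => Fin.cases v (fun j' => v.succAbove (σ j')) j

lemma consFun_injective (v : Fin (n + 1)) (σ : Equiv.Perm (Fin n)) :
    Function.Injective (consFun v σ) := by
  intro a b hab
  induction a using Fin.cases with
  | zero =>
    induction b using Fin.cases with
    | zero => rfl
    | succ b' =>
      simp only [consFun, Fin.cases_zero, Fin.cases_succ] at hab
      exact absurd hab.symm (Fin.succAbove_ne v (σ b'))
  | succ a' =>
    induction b using Fin.cases with
    | zero =>
      simp only [consFun, Fin.cases_zero, Fin.cases_succ] at hab
      exact absurd hab (Fin.succAbove_ne v (σ a'))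
    | succ b' =>
      simp only [consFun, Fin.cases_succ] at hab
      have := σ.injective (Fin.succAbove_right_injective hab)
      rw [this]

/-- the permutation with `π 0 = v` and `π (j+1) = v.succAbove (σ j)`. -/
noncomputable def permCons (v : Fin (n + 1)) (σ : Equiv.Perm (Fin n)) : Equiv.Perm (Fin (n + 1)) :=
  Equiv.ofBijective _ ((Finite.injective_iff_bijective).1 (consFun_injective v σ))

@[simp] lemma permCons_zero (v : Fin (n + 1)) (σ : Equiv.Perm (Fin n)) :
    permCons v σ 0 = v := rfl

@[simp] lemma permCons_succ (v : Fin (n + 1)) (σ : Equiv.Perm (Fin n)) (j : Fin n) :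
    permCons v σ j.succ = v.succAbove (σ j) := rfl

lemma permCons_inj : Function.Injective (fun x : Fin (n+1) × Equiv.Perm (Fin n) =>
    permCons x.1 x.2) := by
  rintro ⟨v, σ⟩ ⟨w, τ⟩ h
  simp only at h
  have h0 : v = w := by
    have := congrArg (fun e => e 0) (congrArg (Equiv.toFun) h)
    simpa using this
  subst h0
  have hστ : σ = τ := by
    apply Equiv.ext
    intro j
    have h2 : permCons v σ j.succ = permCons v τ j.succ := by rw [h]
    rw [permCons_succ, permCons_succ] at h2
    exact Fin.succAbove_right_injective h2
  rw [hστ]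

lemma permCons_surj : Function.Surjective (fun x : Fin (n+1) × Equiv.Perm (Fin n) =>
    permCons x.1 x.2) := by
  have hb : Function.Bijective (fun x : Fin (n+1) × Equiv.Perm (Fin n) =>
      permCons x.1 x.2) := by
    rw [Fintype.bijective_iff_injective_and_card]
    refine ⟨permCons_inj, ?_⟩
    simp [Fintype.card_perm, Nat.factorial_succ]
  exact hb.2

end Stats

section Transfer

variable {n : ℕ}

lemma sum_indicator_lt (n k : ℕ) :
    (∑ w : Fin n, if (w : ℕ) < k then 1 else 0) = min k n := by
  induction n with
  | zero => simp
  | succ m ih =>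
    rw [Fin.sum_univ_castSucc]
    simp only [Fin.coe_castSucc, ih, Fin.val_last]
    by_cases h : m < k <;> simp [h] <;> omega

lemma cnt_permCons_zero (v : Fin (n + 1)) (σ : Equiv.Perm (Fin n)) :
    cnt (permCons v σ) 0 = (v : ℕ) := by
  unfold cnt
  rw [Finset.card_filter, Fin.sum_univ_succ]
  have h0 : ¬((0 : Fin (n+1)) < 0 ∧ permCons v σ 0 < permCons v σ 0) := by simp
  rw [if_neg h0]
  have hterm : ∀ u : Fin n,
      (if (0 : Fin (n+1)) < u.succ ∧ permCons v σ u.succ < permCons v σ 0 then 1 else 0)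
        = (if ((σ u : Fin n) : ℕ) < (v : ℕ) then 1 else 0) := by
    intro u
    congr 1
    simp only [Fin.succ_pos, true_and, permCons_succ, permCons_zero, eq_iff_iff]
    rw [Fin.succAbove_lt_iff_castSucc_lt, Fin.lt_def, Fin.coe_castSucc]
  simp only [hterm]
  rw [zero_add, Equiv.sum_comp σ (fun w : Fin n => if (w : ℕ) < (v : ℕ) then 1 else 0),
    sum_indicator_lt]
  have := v.isLt
  omega

lemma cnt_permCons_succ (v : Fin (n + 1)) (σ : Equiv.Perm (Fin n)) (w : Fin n) :
    cnt (permCons v σ) w.succ = cnt σ w := by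
  unfold cnt
  rw [Finset.card_filter, Finset.card_filter, Fin.sum_univ_succ]
  have h0 : ¬(w.succ < (0 : Fin (n+1)) ∧ permCons v σ 0 < permCons v σ w.succ) := by
    simp [Fin.not_lt_zero]
  rw [if_neg h0, zero_add]
  apply Finset.sum_congr rfl
  intro u _
  congr 1
  simp only [permCons_succ, eq_iff_iff]
  rw [Fin.succ_lt_succ_iff, Fin.succAbove_lt_succAbove_iff]

lemma exists_zero_permCons (v : Fin (n + 1)) (σ : Equiv.Perm (Fin n)) (w : Fin n) :
    (∃ j, j < w.succ ∧ ((permCons v σ j : Fin (n+1)) : ℕ) = 0) ↔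
      (v = 0 ∨ ∃ j, j < w ∧ ((σ j : Fin n) : ℕ) = 0) := by
  have hnz : NeZero n := ⟨by have := w.isLt; omega⟩
  constructor
  · rintro ⟨j, hj, hj0⟩
    induction j using Fin.cases with
    | zero =>
      left
      rw [permCons_zero] at hj0
      exact Fin.ext (by rw [hj0, Fin.val_zero])
    | succ u =>
      by_cases hv : v = 0
      · exact Or.inl hv
      · right
        refine ⟨u, by rwa [Fin.succ_lt_succ_iff] at hj, ?_⟩
        rw [permCons_succ] at hj0
        have : v.succAbove (σ u) = 0 := Fin.ext hj0
        have := (Fin.succAbove_eq_zero_iff hv).1 this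
        simp [this]
  · rintro (rfl | ⟨j, hj, hj0⟩)
    · exact ⟨0, w.succ_pos, by simp⟩
    · by_cases hv : v = 0
      · subst hv
        exact ⟨0, w.succ_pos, by simp⟩
      · refine ⟨j.succ, by rwa [Fin.succ_lt_succ_iff], ?_⟩
        rw [permCons_succ]
        have : σ j = 0 := Fin.ext hj0
        rw [this, Fin.succAbove_ne_zero_zero hv, Fin.val_zero]

lemma statA_permCons (v : Fin (n + 1)) (σ : Equiv.Perm (Fin n)) :
    statA (permCons v σ) = if v = 0 then statA0 σ else statA σ := by
  have key : statA (permCons v σ) =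
      ∑ u : Fin n, (if ((u : ℕ) + 1 < n ∧ cnt σ u = 0 ∧
        (v = 0 ∨ ∃ j, j < u ∧ ((σ j : Fin n) : ℕ) = 0)) then 1 else 0) := by
    unfold statA
    rw [Finset.card_filter, Fin.sum_univ_succ]
    have h0 : ¬ pA (permCons v σ) 0 := by
      rintro ⟨-, -, j, hj, -⟩
      exact Fin.not_lt_zero j hj
    rw [if_neg h0, zero_add]
    apply Finset.sum_congr rfl
    intro u _
    congr 1
    simp only [eq_iff_iff]
    unfold pA
    rw [cnt_permCons_succ, exists_zero_permCons]
    simp only [Fin.val_succ]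
    constructor
    · rintro ⟨h1, h2, h3⟩; exact ⟨by omega, h2, h3⟩
    · rintro ⟨h1, h2, h3⟩; exact ⟨by omega, h2, h3⟩
  by_cases hv : v = 0
  · rw [key, if_pos hv]
    unfold statA0
    rw [Finset.card_filter]
    apply Finset.sum_congr rfl
    intro u _
    congr 1
    simp only [eq_iff_iff]
    unfold pA0
    simp [hv]
  · rw [key, if_neg hv]
    unfold statA
    rw [Finset.card_filter]
    apply Finset.sum_congr rfl
    intro u _
    congr 1
    simp only [eq_iff_iff]
    unfold pA
    simp [hv]

lemma statB_permCons (v : Fin (n + 1)) (σ : Equiv.Perm (Fin n)) :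
    statB (permCons v σ) = if v = 0 then statB0 σ else statB σ := by
  have key : statB (permCons v σ) =
      ∑ u : Fin n, (if (cnt σ u = 1 ∧
        (v = 0 ∨ ∃ j, j < u ∧ ((σ j : Fin n) : ℕ) = 0)) then 1 else 0) := by
    unfold statB
    rw [Finset.card_filter, Fin.sum_univ_succ]
    have h0 : ¬ pB (permCons v σ) 0 := by
      rintro ⟨-, j, hj, -⟩
      exact Fin.not_lt_zero j hj
    rw [if_neg h0, zero_add]
    apply Finset.sum_congr rfl
    intro u _
    congr 1
    simp only [eq_iff_iff]
    unfold pB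
    rw [cnt_permCons_succ, exists_zero_permCons]
  by_cases hv : v = 0
  · rw [key, if_pos hv]
    unfold statB0
    rw [Finset.card_filter]
    apply Finset.sum_congr rfl
    intro u _
    congr 1
    simp only [eq_iff_iff]
    unfold pB0
    simp [hv]
  · rw [key, if_neg hv]
    unfold statB
    rw [Finset.card_filter]
    apply Finset.sum_congr rfl
    intro u _
    congr 1
    simp only [eq_iff_iff]
    unfold pB
    simp [hv]

lemma statA0_permCons (v : Fin (n + 1)) (σ : Equiv.Perm (Fin n)) :
    statA0 (permCons v σ) = (if v = 0 ∧ 0 < n then 1 else 0) + statA0 σ := by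
  unfold statA0
  rw [Finset.card_filter, Fin.sum_univ_succ]
  congr 1
  · congr 1
    simp only [eq_iff_iff]
    unfold pA0
    rw [cnt_permCons_zero]
    simp only [Fin.val_zero, zero_add]
    constructor
    · rintro ⟨h1, h2⟩; exact ⟨Fin.ext h2, by omega⟩
    · rintro ⟨rfl, h2⟩; exact ⟨by omega, rfl⟩
  · rw [Finset.card_filter]
    apply Finset.sum_congr rfl
    intro u _
    congr 1
    simp only [eq_iff_iff]
    unfold pA0
    rw [cnt_permCons_succ]
    simp only [Fin.val_succ]
    constructor <;> (rintro ⟨h1, h2⟩; exact ⟨by omega, h2⟩)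

lemma statB0_permCons (v : Fin (n + 1)) (σ : Equiv.Perm (Fin n)) :
    statB0 (permCons v σ) = (if (v : ℕ) = 1 then 1 else 0) + statB0 σ := by
  unfold statB0
  rw [Finset.card_filter, Fin.sum_univ_succ]
  congr 1
  · congr 1
    simp only [eq_iff_iff]
    unfold pB0
    rw [cnt_permCons_zero]
  · rw [Finset.card_filter]
    apply Finset.sum_congr rfl
    intro u _
    congr 1
    simp only [eq_iff_iff]
    unfold pB0
    rw [cnt_permCons_succ]

end Transfer

section Counting

open Finset

variable {n : ℕ}

def Fcnt (n k ℓ : ℕ) : ℕ :=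
  (univ.filter (fun π : Equiv.Perm (Fin n) => statA π = k ∧ statB π = ℓ)).card

def Gcnt (n k ℓ : ℕ) : ℕ :=
  (univ.filter (fun σ : Equiv.Perm (Fin n) => statA0 σ = k ∧ statB0 σ = ℓ)).card

lemma card_filter_perm_prod (Q : Equiv.Perm (Fin (n+1)) → Prop) [DecidablePred Q] :
    (univ.filter Q).card =
      ∑ v : Fin (n+1),
        (univ.filter (fun σ : Equiv.Perm (Fin n) => Q (permCons v σ))).card := by
  have step : (univ.filter Q).card =
      (univ.filter (fun x : Fin (n+1) × Equiv.Perm (Fin n) => Q (permCons x.1 x.2))).card := by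
    symm
    apply Finset.card_bij (fun x _ => permCons x.1 x.2)
    · intro x hx
      simp only [Finset.mem_filter, Finset.mem_univ, true_and] at hx ⊢
      exact hx
    · intro x hx y hy h
      exact permCons_inj h
    · intro π hπ
      obtain ⟨x, rfl⟩ := permCons_surj π
      refine ⟨x, ?_, rfl⟩
      simpa using hπ
  rw [step, Finset.card_filter, Fintype.sum_prod_type]
  refine Finset.sum_congr rfl fun v _ => ?_
  rw [Finset.card_filter]

lemma Frec (n k ℓ : ℕ) : Fcnt (n+1) k ℓ = Gcnt n k ℓ + n * Fcnt n k ℓ := by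
  unfold Fcnt
  rw [card_filter_perm_prod, Fin.sum_univ_succ]
  congr 1
  · unfold Gcnt
    congr 1
    apply Finset.filter_congr
    intro σ _
    rw [statA_permCons, statB_permCons, if_pos rfl, if_pos rfl]
  · have hterm : ∀ w : Fin n,
        (univ.filter (fun σ : Equiv.Perm (Fin n) =>
          statA (permCons w.succ σ) = k ∧ statB (permCons w.succ σ) = ℓ)).card
          = Fcnt n k ℓ := by
      intro w
      unfold Fcnt
      congr 1
      apply Finset.filter_congr
      intro σ _
      rw [statA_permCons, statB_permCons, if_neg (Fin.succ_ne_zero w),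
        if_neg (Fin.succ_ne_zero w)]
    rw [Finset.sum_congr rfl (fun w _ => hterm w), Finset.sum_const, card_univ,
      Fintype.card_fin, smul_eq_mul]
    rfl

lemma Grec (m k ℓ : ℕ) : Gcnt (m+2) k ℓ =
    (if k = 0 then 0 else Gcnt (m+1) (k-1) ℓ) +
    (if ℓ = 0 then 0 else Gcnt (m+1) k (ℓ-1)) + m * Gcnt (m+1) k ℓ := by
  rw [show Gcnt (m+2) k ℓ = (univ.filter (fun σ : Equiv.Perm (Fin (m+2)) =>
      statA0 σ = k ∧ statB0 σ = ℓ)).card from rfl,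
    card_filter_perm_prod, Fin.sum_univ_succ, Fin.sum_univ_succ]
  have e0 : (univ.filter (fun σ : Equiv.Perm (Fin (m+1)) =>
      statA0 (permCons 0 σ) = k ∧ statB0 (permCons 0 σ) = ℓ)).card
      = (if k = 0 then 0 else Gcnt (m+1) (k-1) ℓ) := by
    by_cases hk : k = 0
    · subst hk
      rw [if_pos rfl, Finset.card_eq_zero, Finset.filter_eq_empty_iff]
      intro σ _
      rw [statA0_permCons]
      rintro ⟨h1, -⟩
      simp at h1
    · rw [if_neg hk]
      unfold Gcnt
      congr 1
      apply Finset.filter_congr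
      intro σ _
      rw [statA0_permCons, statB0_permCons,
        if_pos (show (0 : Fin (m+2)) = 0 ∧ 0 < m+1 from ⟨rfl, Nat.succ_pos m⟩),
        if_neg (show ¬((0 : Fin (m+2)) : ℕ) = 1 by simp)]
      constructor
      · rintro ⟨h1, h2⟩
        exact ⟨by omega, by omega⟩
      · rintro ⟨h1, h2⟩
        exact ⟨by omega, by omega⟩
  have e1 : (univ.filter (fun σ : Equiv.Perm (Fin (m+1)) =>
      statA0 (permCons (0 : Fin (m+1)).succ σ) = k ∧
      statB0 (permCons (0 : Fin (m+1)).succ σ) = ℓ)).card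
      = (if ℓ = 0 then 0 else Gcnt (m+1) k (ℓ-1)) := by
    by_cases hl : ℓ = 0
    · subst hl
      rw [if_pos rfl, Finset.card_eq_zero, Finset.filter_eq_empty_iff]
      intro σ _
      rw [statB0_permCons]
      rintro ⟨-, h2⟩
      rw [if_pos (show (((0 : Fin (m+1)).succ : Fin (m+2)) : ℕ) = 1 by simp)] at h2
      omega
    · rw [if_neg hl]
      unfold Gcnt
      congr 1
      apply Finset.filter_congr
      intro σ _
      rw [statA0_permCons, statB0_permCons]
      have hne : ((0 : Fin (m+1)).succ : Fin (m+2)) ≠ 0 := Fin.succ_ne_zero _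
      rw [if_neg (fun h : _ ∧ _ => hne h.1),
        if_pos (show (((0 : Fin (m+1)).succ : Fin (m+2)) : ℕ) = 1 by simp)]
      constructor
      · rintro ⟨h1, h2⟩
        exact ⟨by omega, by omega⟩
      · rintro ⟨h1, h2⟩
        exact ⟨by omega, by omega⟩
  have e2 : ∀ w : Fin m, (univ.filter (fun σ : Equiv.Perm (Fin (m+1)) =>
      statA0 (permCons w.succ.succ σ) = k ∧
      statB0 (permCons w.succ.succ σ) = ℓ)).card = Gcnt (m+1) k ℓ := by
    intro w
    unfold Gcnt
    congr 1
    apply Finset.filter_congr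
    intro σ _
    rw [statA0_permCons, statB0_permCons]
    have hne : (w.succ.succ : Fin (m+2)) ≠ 0 := Fin.succ_ne_zero _
    have hval : ((w.succ.succ : Fin (m+2)) : ℕ) = (w : ℕ) + 2 := by
      simp [Fin.val_succ]
    rw [if_neg (fun h : _ ∧ _ => hne h.1), if_neg (show ¬((w.succ.succ : Fin (m+2)) : ℕ) = 1 by rw [hval]; omega)]
    simp
  rw [e0, e1, Finset.sum_congr rfl (fun w _ => e2 w), Finset.sum_const, card_univ,
    Fintype.card_fin, smul_eq_mul]
  ring

end Counting

section Closed

open Finset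

lemma cnt_small {n : ℕ} (hn : n ≤ 1) (σ : Equiv.Perm (Fin n)) (p : Fin n) : cnt σ p = 0 := by
  unfold cnt
  rw [Finset.card_eq_zero, Finset.filter_eq_empty_iff]
  intro j _
  rintro ⟨hj, -⟩
  have h1 := p.isLt
  have h2 := j.isLt
  rw [Fin.lt_def] at hj
  omega

lemma statA_small {n : ℕ} (hn : n ≤ 1) (σ : Equiv.Perm (Fin n)) : statA σ = 0 := by
  unfold statA
  rw [Finset.card_eq_zero, Finset.filter_eq_empty_iff]
  intro p _
  rintro ⟨h, -, -⟩
  have := p.isLt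
  omega

lemma statB_small {n : ℕ} (hn : n ≤ 1) (σ : Equiv.Perm (Fin n)) : statB σ = 0 := by
  unfold statB
  rw [Finset.card_eq_zero, Finset.filter_eq_empty_iff]
  intro p _
  rintro ⟨h, -⟩
  rw [cnt_small hn] at h
  omega

lemma statA0_small {n : ℕ} (hn : n ≤ 1) (σ : Equiv.Perm (Fin n)) : statA0 σ = 0 := by
  unfold statA0
  rw [Finset.card_eq_zero, Finset.filter_eq_empty_iff]
  intro p _
  rintro ⟨h, -⟩
  have := p.isLt
  omega

lemma statB0_small {n : ℕ} (hn : n ≤ 1) (σ : Equiv.Perm (Fin n)) : statB0 σ = 0 := by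
  unfold statB0
  rw [Finset.card_eq_zero, Finset.filter_eq_empty_iff]
  intro p _
  intro h
  unfold pB0 at h
  rw [cnt_small hn] at h
  omega

lemma card_perm_small {n : ℕ} (hn : n ≤ 1) :
    (univ : Finset (Equiv.Perm (Fin n))).card = 1 := by
  rw [card_univ, Fintype.card_perm, Fintype.card_fin]
  interval_cases n <;> simp

lemma Fcnt_small {n : ℕ} (hn : n ≤ 1) (k ℓ : ℕ) :
    Fcnt n k ℓ = if k = 0 ∧ ℓ = 0 then 1 else 0 := by
  unfold Fcnt
  by_cases h : k = 0 ∧ ℓ = 0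
  · obtain ⟨rfl, rfl⟩ := h
    rw [if_pos ⟨rfl, rfl⟩, Finset.filter_true_of_mem, card_perm_small hn]
    intro σ _
    exact ⟨statA_small hn σ, statB_small hn σ⟩
  · rw [if_neg h, Finset.card_eq_zero, Finset.filter_eq_empty_iff]
    intro σ _
    rintro ⟨h1, h2⟩
    rw [statA_small hn] at h1
    rw [statB_small hn] at h2
    exact h ⟨h1.symm, h2.symm⟩

lemma Gcnt_small {n : ℕ} (hn : n ≤ 1) (k ℓ : ℕ) :
    Gcnt n k ℓ = if k = 0 ∧ ℓ = 0 then 1 else 0 := by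
  unfold Gcnt
  by_cases h : k = 0 ∧ ℓ = 0
  · obtain ⟨rfl, rfl⟩ := h
    rw [if_pos ⟨rfl, rfl⟩, Finset.filter_true_of_mem, card_perm_small hn]
    intro σ _
    exact ⟨statA0_small hn σ, statB0_small hn σ⟩
  · rw [if_neg h, Finset.card_eq_zero, Finset.filter_eq_empty_iff]
    intro σ _
    rintro ⟨h1, h2⟩
    rw [statA0_small hn] at h1
    rw [statB0_small hn] at h2
    exact h ⟨h1.symm, h2.symm⟩

lemma mul_stirling_zero (m : ℕ) : m * stirlingFirst m 0 = 0 := by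
  cases m with
  | zero => simp
  | succ m' => simp [stirlingFirst]

lemma Gclosed : ∀ m k ℓ : ℕ, Gcnt (m+1) k ℓ = (k+ℓ).choose k * stirlingFirst m (k+ℓ) := by
  intro m
  induction m with
  | zero =>
    intro k ℓ
    rw [Gcnt_small le_rfl]
    rcases k with _ | k <;> rcases ℓ with _ | ℓ <;> simp [stirlingFirst]
  | succ m ih =>
    intro k ℓ
    rw [Grec m k ℓ, ih, ih, ih]
    rcases k with _ | k
    · rcases ℓ with _ | ℓ
      · 
        simp only [if_true, Nat.add_zero, Nat.zero_add, Nat.choose_zero_right, one_mul, zero_add]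
        exact mul_stirling_zero m
      · rw [if_neg (Nat.succ_ne_zero ℓ)]
        simp only [if_true, Nat.succ_sub_one, Nat.zero_add, Nat.choose_zero_right, one_mul, zero_add]
        rw [show stirlingFirst (m+1) (ℓ+1) = m * stirlingFirst m (ℓ+1) + stirlingFirst m ℓ
          from rfl]
        ring
    · rcases ℓ with _ | ℓ
      · rw [if_neg (Nat.succ_ne_zero k)]
        simp only [if_true, Nat.succ_sub_one, Nat.add_zero, Nat.choose_self, one_mul, add_zero]
        rw [show stirlingFirst (m+1) (k+1) = m * stirlingFirst m (k+1) + stirlingFirst m k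
          from rfl]
        ring
      · rw [if_neg (Nat.succ_ne_zero k), if_neg (Nat.succ_ne_zero ℓ)]
        simp only [Nat.succ_sub_one]
        rw [show k + (ℓ+1) = k+1+ℓ by omega, show k+1+(ℓ+1) = (k+1+ℓ)+1 by omega]
        rw [show stirlingFirst (m+1) ((k+1+ℓ)+1)
            = m * stirlingFirst m ((k+1+ℓ)+1) + stirlingFirst m (k+1+ℓ) from rfl]
        rw [Nat.choose_succ_succ (k+1+ℓ) k]
        ring

end Closed

section FClosed

open Finset

lemma Fclosed00 : ∀ m : ℕ, Fcnt (m+2) 0 0 = 2 * Nat.factorial (m+1) := by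
  intro m
  induction m with
  | zero =>
    rw [Frec, Gcnt_small le_rfl, Fcnt_small le_rfl]
    simp
  | succ m ih =>
    rw [Frec, ih, Gclosed]
    simp only [Nat.add_zero, Nat.choose_zero_right, one_mul]
    rw [show stirlingFirst (m+1) 0 = 0 from rfl]
    rw [Nat.factorial_succ (m+1)]
    ring

lemma choose_fact_step (i m : ℕ) (h : i ≤ m+1) :
    (m+2).choose i * Nat.factorial (m+2-i) =
      (m+2) * ((m+1).choose i * Nat.factorial (m+1-i)) := by
  have h2 : i ≤ m+2 := by omega
  have e1 := Nat.choose_mul_factorial_mul_factorial h2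
  have e2 := Nat.choose_mul_factorial_mul_factorial h
  apply Nat.eq_of_mul_eq_mul_right (Nat.factorial_pos i)
  calc (m+2).choose i * Nat.factorial (m+2-i) * Nat.factorial i
      = (m+2).choose i * Nat.factorial i * Nat.factorial (m+2-i) := by ring
    _ = Nat.factorial (m+2) := e1
    _ = (m+2) * Nat.factorial (m+1) := Nat.factorial_succ (m+1)
    _ = (m+2) * ((m+1).choose i * Nat.factorial i * Nat.factorial (m+1-i)) := by rw [e2]
    _ = (m+2) * ((m+1).choose i * Nat.factorial (m+1-i)) * Nat.factorial i := by ring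

lemma Fclosedpos : ∀ m k ℓ : ℕ, ¬(k = 0 ∧ ℓ = 0) →
    Fcnt (m+2) k ℓ = (k+ℓ).choose k *
      ∑ i ∈ Finset.Icc 2 (m+1),
        (m+1).choose i * Nat.factorial (m+1-i) * stirlingFirst (i-1) (k+ℓ) := by
  intro m
  induction m with
  | zero =>
    intro k ℓ h
    rw [Frec, Gcnt_small le_rfl, Fcnt_small le_rfl, if_neg h]
    rw [show Finset.Icc 2 (0+1) = ∅ from Finset.Icc_eq_empty (by omega)]
    simp
  | succ m ih =>
    intro k ℓ h
    rw [Frec, ih k ℓ h, Gclosed]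
    rw [Finset.sum_Icc_succ_top (show 2 ≤ m+2 by omega)]
    rw [show m+1+1 = m+2 from rfl]
    rw [show (m+2).choose (m+2) * Nat.factorial (m+2-(m+2)) * stirlingFirst (m+2-1) (k+ℓ)
        = stirlingFirst (m+1) (k+ℓ) by
      rw [Nat.choose_self, Nat.sub_self, Nat.factorial_zero]
      simp]
    have hsum : ∑ i ∈ Finset.Icc 2 (m+1),
        (m+2).choose i * Nat.factorial (m+2-i) * stirlingFirst (i-1) (k+ℓ)
        = (m+2) * ∑ i ∈ Finset.Icc 2 (m+1),
            (m+1).choose i * Nat.factorial (m+1-i) * stirlingFirst (i-1) (k+ℓ) := by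
      rw [Finset.mul_sum]
      apply Finset.sum_congr rfl
      intro i hi
      rw [Finset.mem_Icc] at hi
      rw [choose_fact_step i m hi.2]
      ring
    rw [hsum]
    ring

lemma Gsym (n k ℓ : ℕ) : Gcnt n k ℓ = Gcnt n ℓ k := by
  cases n with
  | zero =>
    rw [Gcnt_small (by omega), Gcnt_small (by omega)]
    simp [and_comm]
  | succ m =>
    rw [Gclosed, Gclosed]
    have hc : (k+ℓ).choose k = (ℓ+k).choose ℓ := by
      rw [show ℓ + k = k + ℓ by ring]
      rw [← Nat.choose_symm (Nat.le_add_right k ℓ)]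
      congr 1
      omega
    rw [hc, show k + ℓ = ℓ + k by ring]

lemma Fsym (n k ℓ : ℕ) : Fcnt n k ℓ = Fcnt n ℓ k := by
  induction n generalizing k ℓ with
  | zero =>
    rw [Fcnt_small (by omega), Fcnt_small (by omega)]
    simp [and_comm]
  | succ m ih =>
    rw [Frec, Frec, Gsym, ih]

end FClosed

section Mesh

open Finset

variable {n : ℕ}

def Sset : Set (ℕ × ℕ) := {(0, 0), (0, 1), (2, 0), (2, 1), (2, 2), (3, 0), (3, 1), (3, 2)}

lemma posExt_zero (i : Fin 3 → Fin n) : posExt i 0 = 0 := rfl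
lemma posExt_one (i : Fin 3 → Fin n) : posExt i 1 = (i 0 : ℕ) + 1 := rfl
lemma posExt_two (i : Fin 3 → Fin n) : posExt i 2 = (i 1 : ℕ) + 1 := rfl
lemma posExt_three (i : Fin 3 → Fin n) : posExt i 3 = (i 2 : ℕ) + 1 := rfl
lemma posExt_four (i : Fin 3 → Fin n) : posExt i 4 = n + 1 := rfl

lemma valExt1_zero (π : Equiv.Perm (Fin n)) (i : Fin 3 → Fin n) :
    valExt perm123 π i 0 = 0 := rfl
lemma valExt1_one (π : Equiv.Perm (Fin n)) (i : Fin 3 → Fin n) :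
    valExt perm123 π i 1 = (π (i 0) : ℕ) + 1 := rfl
lemma valExt1_two (π : Equiv.Perm (Fin n)) (i : Fin 3 → Fin n) :
    valExt perm123 π i 2 = (π (i 1) : ℕ) + 1 := rfl
lemma valExt1_three (π : Equiv.Perm (Fin n)) (i : Fin 3 → Fin n) :
    valExt perm123 π i 3 = (π (i 2) : ℕ) + 1 := rfl
lemma valExt1_four (π : Equiv.Perm (Fin n)) (i : Fin 3 → Fin n) :
    valExt perm123 π i 4 = n + 1 := rfl

lemma valExt2_zero (π : Equiv.Perm (Fin n)) (i : Fin 3 → Fin n) :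
    valExt perm132 π i 0 = 0 := rfl
lemma valExt2_one (π : Equiv.Perm (Fin n)) (i : Fin 3 → Fin n) :
    valExt perm132 π i 1 = (π (i 0) : ℕ) + 1 := rfl
lemma valExt2_two (π : Equiv.Perm (Fin n)) (i : Fin 3 → Fin n) :
    valExt perm132 π i 2 = (π (i 2) : ℕ) + 1 := rfl
lemma valExt2_three (π : Equiv.Perm (Fin n)) (i : Fin 3 → Fin n) :
    valExt perm132 π i 3 = (π (i 1) : ℕ) + 1 := rfl
lemma valExt2_four (π : Equiv.Perm (Fin n)) (i : Fin 3 → Fin n) :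
    valExt perm132 π i 4 = n + 1 := rfl

end Mesh
section MeshIff

open Finset

variable {n : ℕ}

def Occ1 (π : Equiv.Perm (Fin n)) (i : Fin 3 → Fin n) : Prop :=
  i 0 < i 1 ∧ i 1 < i 2 ∧ π (i 0) < π (i 1) ∧ π (i 1) < π (i 2) ∧
  (∀ j, j < i 0 → π (i 1) < π j) ∧ (∀ j, i 1 < j → j ≠ i 2 → π (i 2) < π j)

def Occ2 (π : Equiv.Perm (Fin n)) (i : Fin 3 → Fin n) : Prop :=
  i 0 < i 1 ∧ i 1 < i 2 ∧ π (i 0) < π (i 2) ∧ π (i 2) < π (i 1) ∧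
  (∀ j, j < i 0 → π (i 2) < π j) ∧ (∀ j, i 1 < j → j ≠ i 2 → π (i 1) < π j)

lemma sset_cases {a b : ℕ} (hab : (a, b) ∈ Sset) :
    (a = 0 ∧ b = 0) ∨ (a = 0 ∧ b = 1) ∨ (a = 2 ∧ b = 0) ∨ (a = 2 ∧ b = 1) ∨
    (a = 2 ∧ b = 2) ∨ (a = 3 ∧ b = 0) ∨ (a = 3 ∧ b = 1) ∨ (a = 3 ∧ b = 2) := by
  simp only [Sset, Set.mem_insert_iff, Set.mem_singleton_iff, Prod.mk.injEq] at hab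
  tauto

lemma mesh1_iff (π : Equiv.Perm (Fin n)) (i : Fin 3 → Fin n) :
    IsMeshOcc perm123 Sset π i ↔ Occ1 π i := by
  constructor
  · rintro ⟨hm, hp, hmesh⟩
    have h01 : i 0 < i 1 := hm (show (0 : Fin 3) < 1 by decide)
    have h12 : i 1 < i 2 := hm (show (1 : Fin 3) < 2 by decide)
    have hv01 : π (i 0) < π (i 1) := (hp 0 1).2 (by decide)
    have hv12 : π (i 1) < π (i 2) := (hp 1 2).2 (by decide)
    refine ⟨h01, h12, hv01, hv12, ?_, ?_⟩
    · intro j hj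
      by_contra hle
      have hne1 : π j ≠ π (i 1) := fun h => absurd (π.injective h ▸ hj) (by
        intro hh; exact absurd (hh.trans h01) (lt_irrefl _))
      have hlt1 : π j < π (i 1) := lt_of_le_of_ne (not_lt.1 hle) hne1
      rcases lt_trichotomy (π j) (π (i 0)) with h | h | h
      · exact hmesh 0 0 (by simp [Sset]) ⟨j, by
          simp only [Nat.reduceAdd, posExt_zero, posExt_one, valExt1_zero, valExt1_one]
          rw [Fin.lt_def] at hj h
          omega⟩
      · exact absurd (π.injective h ▸ hj) (lt_irrefl _)
      · exact hmesh 0 1 (by simp [Sset]) ⟨j, by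
          simp only [Nat.reduceAdd, posExt_zero, posExt_one, valExt1_one, valExt1_two]
          rw [Fin.lt_def] at hj h hlt1
          omega⟩
    · intro j hj hne
      by_contra hle
      have hne2 : π j ≠ π (i 2) := π.injective.ne hne
      have hlt2 : π j < π (i 2) := lt_of_le_of_ne (not_lt.1 hle) hne2
      have hne1 : j ≠ i 1 := fun h => absurd (h ▸ hj) (lt_irrefl _)
      have hnej1 : π j ≠ π (i 1) := π.injective.ne hne1
      have hne0 : j ≠ i 0 := fun h => by
        rw [h] at hj; exact absurd (hj.trans h01) (lt_irrefl _)
      have hnej0 : π j ≠ π (i 0) := π.injective.ne hne0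
      rcases lt_or_gt_of_ne hne with hlt | hgt
      · -- i 1 < j < i 2 : use (2, b)
        rcases lt_trichotomy ((π j : ℕ)) ((π (i 0) : ℕ)) with h | h | h
        · exact hmesh 2 0 (by simp [Sset]) ⟨j, by
            simp only [Nat.reduceAdd, posExt_two, posExt_three, valExt1_zero, valExt1_one]
            rw [Fin.lt_def] at hj hlt
            omega⟩
        · exact absurd (Fin.ext h : π j = π (i 0)) hnej0
        · rcases lt_trichotomy ((π j : ℕ)) ((π (i 1) : ℕ)) with h' | h' | h'
          · exact hmesh 2 1 (by simp [Sset]) ⟨j, by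
              simp only [Nat.reduceAdd, posExt_two, posExt_three, valExt1_one, valExt1_two]
              rw [Fin.lt_def] at hj hlt
              omega⟩
          · exact absurd (Fin.ext h' : π j = π (i 1)) hnej1
          · exact hmesh 2 2 (by simp [Sset]) ⟨j, by
              simp only [Nat.reduceAdd, posExt_two, posExt_three, valExt1_two, valExt1_three]
              rw [Fin.lt_def] at hj hlt hlt2
              omega⟩
      · -- i 2 < j : use (3, b)
        rcases lt_trichotomy ((π j : ℕ)) ((π (i 0) : ℕ)) with h | h | h
        · exact hmesh 3 0 (by simp [Sset]) ⟨j, by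
            simp only [Nat.reduceAdd, posExt_three, posExt_four, valExt1_zero, valExt1_one]
            have hgt2 := Fin.lt_def.1 hgt
            have := j.isLt
            omega⟩
        · exact absurd (Fin.ext h : π j = π (i 0)) hnej0
        · rcases lt_trichotomy ((π j : ℕ)) ((π (i 1) : ℕ)) with h' | h' | h'
          · exact hmesh 3 1 (by simp [Sset]) ⟨j, by
              simp only [Nat.reduceAdd, posExt_three, posExt_four, valExt1_one, valExt1_two]
              have hgt2 := Fin.lt_def.1 hgt
              have := j.isLt
              omega⟩
          · exact absurd (Fin.ext h' : π j = π (i 1)) hnej1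
          · exact hmesh 3 2 (by simp [Sset]) ⟨j, by
              simp only [Nat.reduceAdd, posExt_three, posExt_four, valExt1_two, valExt1_three]
              have hgt2 := Fin.lt_def.1 hgt
              have hlt2' := Fin.lt_def.1 hlt2
              have := j.isLt
              omega⟩
  · rintro ⟨h01, h12, hv01, hv12, hlow, hhigh⟩
    have hv02 : π (i 0) < π (i 2) := hv01.trans hv12
    refine ⟨?_, ?_, ?_⟩
    · intro a b hab
      fin_cases a <;> fin_cases b
      · exact absurd hab (lt_irrefl _)
      · exact h01
      · exact h01.trans h12
      · exact absurd hab (by decide)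
      · exact absurd hab (lt_irrefl _)
      · exact h12
      · exact absurd hab (by decide)
      · exact absurd hab (by decide)
      · exact absurd hab (lt_irrefl _)
    · intro a b
      fin_cases a <;> fin_cases b
      · exact iff_of_false (lt_irrefl _) (by decide)
      · exact iff_of_true hv01 (by decide)
      · exact iff_of_true hv02 (by decide)
      · exact iff_of_false (lt_asymm hv01) (by decide)
      · exact iff_of_false (lt_irrefl _) (by decide)
      · exact iff_of_true hv12 (by decide)
      · exact iff_of_false (lt_asymm hv02) (by decide)
      · exact iff_of_false (lt_asymm hv12) (by decide)
      · exact iff_of_false (lt_irrefl _) (by decide)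
    · intro a b hab
      have hv01' := Fin.lt_def.1 hv01
      have hv12' := Fin.lt_def.1 hv12
      rcases sset_cases hab with ⟨ha, hb⟩ | ⟨ha, hb⟩ | ⟨ha, hb⟩ | ⟨ha, hb⟩ |
        ⟨ha, hb⟩ | ⟨ha, hb⟩ | ⟨ha, hb⟩ | ⟨ha, hb⟩ <;> subst ha <;> subst hb <;>
        rintro ⟨j, hj1, hj2, hj3, hj4⟩
      · simp only [Nat.reduceAdd, posExt_zero, posExt_one, valExt1_zero, valExt1_one] at hj1 hj2 hj3 hj4
        have hjlt : j < i 0 := Fin.lt_def.2 (by omega)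
        have := Fin.lt_def.1 (hlow j hjlt)
        omega
      · simp only [Nat.reduceAdd, posExt_zero, posExt_one, valExt1_one, valExt1_two] at hj1 hj2 hj3 hj4
        have hjlt : j < i 0 := Fin.lt_def.2 (by omega)
        have := Fin.lt_def.1 (hlow j hjlt)
        omega
      · simp only [Nat.reduceAdd, posExt_two, posExt_three, valExt1_zero, valExt1_one] at hj1 hj2 hj3 hj4
        have hjgt : i 1 < j := Fin.lt_def.2 (by omega)
        have hjne : j ≠ i 2 := fun h => by rw [h] at hj2; omega
        have := Fin.lt_def.1 (hhigh j hjgt hjne)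
        omega
      · simp only [Nat.reduceAdd, posExt_two, posExt_three, valExt1_one, valExt1_two] at hj1 hj2 hj3 hj4
        have hjgt : i 1 < j := Fin.lt_def.2 (by omega)
        have hjne : j ≠ i 2 := fun h => by rw [h] at hj2; omega
        have := Fin.lt_def.1 (hhigh j hjgt hjne)
        omega
      · simp only [Nat.reduceAdd, posExt_two, posExt_three, valExt1_two, valExt1_three] at hj1 hj2 hj3 hj4
        have hjgt : i 1 < j := Fin.lt_def.2 (by omega)
        have hjne : j ≠ i 2 := fun h => by rw [h] at hj2; omega
        have := Fin.lt_def.1 (hhigh j hjgt hjne)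
        omega
      · simp only [Nat.reduceAdd, posExt_three, posExt_four, valExt1_zero, valExt1_one] at hj1 hj2 hj3 hj4
        have hjgt : i 1 < j := Fin.lt_def.2 (by have := Fin.lt_def.1 h12; omega)
        have hjne : j ≠ i 2 := fun h => by rw [h] at hj1; omega
        have := Fin.lt_def.1 (hhigh j hjgt hjne)
        omega
      · simp only [Nat.reduceAdd, posExt_three, posExt_four, valExt1_one, valExt1_two] at hj1 hj2 hj3 hj4
        have hjgt : i 1 < j := Fin.lt_def.2 (by have := Fin.lt_def.1 h12; omega)
        have hjne : j ≠ i 2 := fun h => by rw [h] at hj1; omega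
        have := Fin.lt_def.1 (hhigh j hjgt hjne)
        omega
      · simp only [Nat.reduceAdd, posExt_three, posExt_four, valExt1_two, valExt1_three] at hj1 hj2 hj3 hj4
        have hjgt : i 1 < j := Fin.lt_def.2 (by have := Fin.lt_def.1 h12; omega)
        have hjne : j ≠ i 2 := fun h => by rw [h] at hj1; omega
        have := Fin.lt_def.1 (hhigh j hjgt hjne)
        omega

end MeshIff
section MeshIff2

open Finset

variable {n : ℕ}

lemma mesh2_iff (π : Equiv.Perm (Fin n)) (i : Fin 3 → Fin n) :
    IsMeshOcc perm132 Sset π i ↔ Occ2 π i := by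
  constructor
  · rintro ⟨hm, hp, hmesh⟩
    have h01 : i 0 < i 1 := hm (show (0 : Fin 3) < 1 by decide)
    have h12 : i 1 < i 2 := hm (show (1 : Fin 3) < 2 by decide)
    have hv02 : π (i 0) < π (i 2) := (hp 0 2).2 (by decide)
    have hv21 : π (i 2) < π (i 1) := (hp 2 1).2 (by decide)
    refine ⟨h01, h12, hv02, hv21, ?_, ?_⟩
    · intro j hj
      by_contra hle
      have hne2 : j ≠ i 2 := fun h => by
        rw [h] at hj; exact absurd ((h01.trans h12).trans hj) (lt_irrefl _)
      have hnej2 : π j ≠ π (i 2) := π.injective.ne hne2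
      have hlt2 : π j < π (i 2) := lt_of_le_of_ne (not_lt.1 hle) hnej2
      rcases lt_trichotomy (π j) (π (i 0)) with h | h | h
      · exact hmesh 0 0 (by simp [Sset]) ⟨j, by
          simp only [Nat.reduceAdd, posExt_zero, posExt_one, valExt2_zero, valExt2_one]
          rw [Fin.lt_def] at hj h
          omega⟩
      · exact absurd (π.injective h ▸ hj) (lt_irrefl _)
      · exact hmesh 0 1 (by simp [Sset]) ⟨j, by
          simp only [Nat.reduceAdd, posExt_zero, posExt_one, valExt2_one, valExt2_two]
          rw [Fin.lt_def] at hj h hlt2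
          omega⟩
    · intro j hj hne
      by_contra hle
      have hne1 : j ≠ i 1 := fun h => absurd (h ▸ hj) (lt_irrefl _)
      have hnej1 : π j ≠ π (i 1) := π.injective.ne hne1
      have hlt1 : π j < π (i 1) := lt_of_le_of_ne (not_lt.1 hle) hnej1
      have hnej2 : π j ≠ π (i 2) := π.injective.ne hne
      have hne0 : j ≠ i 0 := fun h => by
        rw [h] at hj; exact absurd (hj.trans h01) (lt_irrefl _)
      have hnej0 : π j ≠ π (i 0) := π.injective.ne hne0
      rcases lt_or_gt_of_ne hne with hlt | hgt
      · rcases lt_trichotomy ((π j : ℕ)) ((π (i 0) : ℕ)) with h | h | h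
        · exact hmesh 2 0 (by simp [Sset]) ⟨j, by
            simp only [Nat.reduceAdd, posExt_two, posExt_three, valExt2_zero, valExt2_one]
            rw [Fin.lt_def] at hj hlt
            omega⟩
        · exact absurd (Fin.ext h : π j = π (i 0)) hnej0
        · rcases lt_trichotomy ((π j : ℕ)) ((π (i 2) : ℕ)) with h' | h' | h'
          · exact hmesh 2 1 (by simp [Sset]) ⟨j, by
              simp only [Nat.reduceAdd, posExt_two, posExt_three, valExt2_one, valExt2_two]
              rw [Fin.lt_def] at hj hlt
              omega⟩
          · exact absurd (Fin.ext h' : π j = π (i 2)) hnej2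
          · exact hmesh 2 2 (by simp [Sset]) ⟨j, by
              simp only [Nat.reduceAdd, posExt_two, posExt_three, valExt2_two, valExt2_three]
              rw [Fin.lt_def] at hj hlt
              have hlt1' := Fin.lt_def.1 hlt1
              omega⟩
      · rcases lt_trichotomy ((π j : ℕ)) ((π (i 0) : ℕ)) with h | h | h
        · exact hmesh 3 0 (by simp [Sset]) ⟨j, by
            simp only [Nat.reduceAdd, posExt_three, posExt_four, valExt2_zero, valExt2_one]
            have hgt2 := Fin.lt_def.1 hgt
            have := j.isLt
            omega⟩
        · exact absurd (Fin.ext h : π j = π (i 0)) hnej0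
        · rcases lt_trichotomy ((π j : ℕ)) ((π (i 2) : ℕ)) with h' | h' | h'
          · exact hmesh 3 1 (by simp [Sset]) ⟨j, by
              simp only [Nat.reduceAdd, posExt_three, posExt_four, valExt2_one, valExt2_two]
              have hgt2 := Fin.lt_def.1 hgt
              have := j.isLt
              omega⟩
          · exact absurd (Fin.ext h' : π j = π (i 2)) hnej2
          · exact hmesh 3 2 (by simp [Sset]) ⟨j, by
              simp only [Nat.reduceAdd, posExt_three, posExt_four, valExt2_two, valExt2_three]
              have hgt2 := Fin.lt_def.1 hgt
              have hlt1' := Fin.lt_def.1 hlt1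
              have := j.isLt
              omega⟩
  · rintro ⟨h01, h12, hv02, hv21, hlow, hhigh⟩
    have hv01 : π (i 0) < π (i 1) := hv02.trans hv21
    refine ⟨?_, ?_, ?_⟩
    · intro a b hab
      fin_cases a <;> fin_cases b
      · exact absurd hab (lt_irrefl _)
      · exact h01
      · exact h01.trans h12
      · exact absurd hab (by decide)
      · exact absurd hab (lt_irrefl _)
      · exact h12
      · exact absurd hab (by decide)
      · exact absurd hab (by decide)
      · exact absurd hab (lt_irrefl _)
    · intro a b
      fin_cases a <;> fin_cases b
      · exact iff_of_false (lt_irrefl _) (by decide)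
      · exact iff_of_true hv01 (by decide)
      · exact iff_of_true hv02 (by decide)
      · exact iff_of_false (lt_asymm hv01) (by decide)
      · exact iff_of_false (lt_irrefl _) (by decide)
      · exact iff_of_false (lt_asymm hv21) (by decide)
      · exact iff_of_false (lt_asymm hv02) (by decide)
      · exact iff_of_true hv21 (by decide)
      · exact iff_of_false (lt_irrefl _) (by decide)
    · intro a b hab
      have hv02' := Fin.lt_def.1 hv02
      have hv21' := Fin.lt_def.1 hv21
      rcases sset_cases hab with ⟨ha, hb⟩ | ⟨ha, hb⟩ | ⟨ha, hb⟩ | ⟨ha, hb⟩ |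
        ⟨ha, hb⟩ | ⟨ha, hb⟩ | ⟨ha, hb⟩ | ⟨ha, hb⟩ <;> subst ha <;> subst hb <;>
        rintro ⟨j, hj1, hj2, hj3, hj4⟩
      · simp only [Nat.reduceAdd, posExt_zero, posExt_one, valExt2_zero, valExt2_one]
          at hj1 hj2 hj3 hj4
        have hjlt : j < i 0 := Fin.lt_def.2 (by omega)
        have := Fin.lt_def.1 (hlow j hjlt)
        omega
      · simp only [Nat.reduceAdd, posExt_zero, posExt_one, valExt2_one, valExt2_two]
          at hj1 hj2 hj3 hj4
        have hjlt : j < i 0 := Fin.lt_def.2 (by omega)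
        have := Fin.lt_def.1 (hlow j hjlt)
        omega
      · simp only [Nat.reduceAdd, posExt_two, posExt_three, valExt2_zero, valExt2_one]
          at hj1 hj2 hj3 hj4
        have hjgt : i 1 < j := Fin.lt_def.2 (by omega)
        have hjne : j ≠ i 2 := fun h => by rw [h] at hj2; omega
        have := Fin.lt_def.1 (hhigh j hjgt hjne)
        omega
      · simp only [Nat.reduceAdd, posExt_two, posExt_three, valExt2_one, valExt2_two]
          at hj1 hj2 hj3 hj4
        have hjgt : i 1 < j := Fin.lt_def.2 (by omega)
        have hjne : j ≠ i 2 := fun h => by rw [h] at hj2; omega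
        have := Fin.lt_def.1 (hhigh j hjgt hjne)
        omega
      · simp only [Nat.reduceAdd, posExt_two, posExt_three, valExt2_two, valExt2_three]
          at hj1 hj2 hj3 hj4
        have hjgt : i 1 < j := Fin.lt_def.2 (by omega)
        have hjne : j ≠ i 2 := fun h => by rw [h] at hj2; omega
        have := Fin.lt_def.1 (hhigh j hjgt hjne)
        omega
      · simp only [Nat.reduceAdd, posExt_three, posExt_four, valExt2_zero, valExt2_one]
          at hj1 hj2 hj3 hj4
        have hjgt : i 1 < j := Fin.lt_def.2 (by have := Fin.lt_def.1 h12; omega)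
        have hjne : j ≠ i 2 := fun h => by rw [h] at hj1; omega
        have := Fin.lt_def.1 (hhigh j hjgt hjne)
        omega
      · simp only [Nat.reduceAdd, posExt_three, posExt_four, valExt2_one, valExt2_two]
          at hj1 hj2 hj3 hj4
        have hjgt : i 1 < j := Fin.lt_def.2 (by have := Fin.lt_def.1 h12; omega)
        have hjne : j ≠ i 2 := fun h => by rw [h] at hj1; omega
        have := Fin.lt_def.1 (hhigh j hjgt hjne)
        omega
      · simp only [Nat.reduceAdd, posExt_three, posExt_four, valExt2_two, valExt2_three]
          at hj1 hj2 hj3 hj4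
        have hjgt : i 1 < j := Fin.lt_def.2 (by have := Fin.lt_def.1 h12; omega)
        have hjne : j ≠ i 2 := fun h => by rw [h] at hj1; omega
        have := Fin.lt_def.1 (hhigh j hjgt hjne)
        omega

end MeshIff2

section OccEq

open Finset

variable {n : ℕ}

lemma occ1_mid {π : Equiv.Perm (Fin n)} {i : Fin 3 → Fin n} (h : Occ1 π i) : pA π (i 1) := by
  obtain ⟨h01, h12, hv01, hv12, hlow, hhigh⟩ := h
  have hpos : 0 < n := (i 0).pos
  refine ⟨?_, ?_, ?_⟩
  · have := Fin.lt_def.1 h12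
    have := (i 2).isLt
    omega
  · unfold cnt
    rw [Finset.card_eq_zero, Finset.filter_eq_empty_iff]
    intro j _
    rintro ⟨hj, hlt⟩
    by_cases hje : j = i 2
    · subst hje
      exact absurd hlt (lt_asymm hv12)
    · exact absurd hlt (lt_asymm (hv12.trans (hhigh j hj hje)))
  · set z : Fin n := ⟨0, hpos⟩ with hz
    refine ⟨π.symm z, ?_, ?_⟩
    · have h0 : π (π.symm z) = z := π.apply_symm_apply z
      have hne : π.symm z ≠ i 1 := by
        intro h
        rw [h] at h0
        have := Fin.lt_def.1 hv01
        rw [h0] at this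
        simp [hz] at this
      by_contra hnotlt
      have hgt : i 1 < π.symm z := lt_of_le_of_ne (not_lt.1 hnotlt) (Ne.symm hne)
      by_cases h2 : π.symm z = i 2
      · rw [h2] at h0
        have := Fin.lt_def.1 hv12
        rw [h0] at this
        simp [hz] at this
      · have hh := hhigh _ hgt h2
        rw [h0] at hh
        have := Fin.lt_def.1 hh
        simp [hz] at this
    · rw [π.apply_symm_apply]

lemma occ1_inj {π : Equiv.Perm (Fin n)} (i i' : Fin 3 → Fin n)
    (h : Occ1 π i) (h' : Occ1 π i') (hmid : i 1 = i' 1) : i = i' := by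
  obtain ⟨h01, h12, hv01, hv12, hlow, hhigh⟩ := h
  obtain ⟨h01', h12', hv01', hv12', hlow', hhigh'⟩ := h'
  have h00 : i 0 = i' 0 := by
    rcases lt_trichotomy (i 0) (i' 0) with hlt | heq | hgt
    · exfalso
      have := hlow' (i 0) hlt
      rw [← hmid] at this
      exact absurd (hv01.trans this) (lt_irrefl _)
    · exact heq
    · exfalso
      have := hlow (i' 0) hgt
      rw [hmid] at this
      exact absurd (hv01'.trans this) (lt_irrefl _)
  have h22 : i 2 = i' 2 := by
    by_contra hne
    have ha : π (i 2) < π (i' 2) := by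
      apply hhigh
      · rw [hmid]; exact h12'
      · exact fun hh => hne hh.symm
    have hb : π (i' 2) < π (i 2) := by
      apply hhigh'
      · rw [← hmid]; exact h12
      · exact fun hh => hne hh
    exact absurd (ha.trans hb) (lt_irrefl _)
  funext a
  fin_cases a
  · exact h00
  · exact hmid
  · exact h22

lemma occ1_surj {π : Equiv.Perm (Fin n)} (p : Fin n) (hp : pA π p) :
    ∃ i : Fin 3 → Fin n, Occ1 π i ∧ i 1 = p := by
  obtain ⟨hp1, hp2, j₀, hj₀, hj₀0⟩ := hp
  have hcnt : ∀ j, p < j → π p < π j := by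
    intro j hj
    unfold cnt at hp2
    rw [Finset.card_eq_zero, Finset.filter_eq_empty_iff] at hp2
    have hnot := hp2 (Finset.mem_univ j)
    have hne : j ≠ p := fun h => absurd (h ▸ hj) (lt_irrefl _)
    have : ¬ π j < π p := fun hh => hnot ⟨hj, hh⟩
    exact lt_of_le_of_ne (not_lt.1 this) (π.injective.ne (Ne.symm hne))
  have hT : (univ.filter (fun j : Fin n => p < j)).Nonempty :=
    ⟨⟨(p : ℕ) + 1, hp1⟩, by
      rw [Finset.mem_filter]
      exact ⟨Finset.mem_univ _, Fin.lt_def.2 (by simp)⟩⟩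
  obtain ⟨i2, hi2mem, hi2min⟩ := Finset.exists_min_image _ π hT
  rw [Finset.mem_filter] at hi2mem
  have hpi2 : p < i2 := hi2mem.2
  have hppos : (π p : ℕ) ≠ 0 := by
    intro h0
    have : π j₀ = π p := Fin.ext (by omega)
    have := π.injective this
    subst this
    exact absurd hj₀ (lt_irrefl _)
  have hTl : (univ.filter (fun j : Fin n => π j < π p)).Nonempty :=
    ⟨j₀, by
      rw [Finset.mem_filter]
      exact ⟨Finset.mem_univ _, Fin.lt_def.2 (by omega)⟩⟩
  obtain ⟨i0, hi0mem, hi0min⟩ := Finset.exists_min_image _ (fun j => j) hTl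
  rw [Finset.mem_filter] at hi0mem
  have hv0p : π i0 < π p := hi0mem.2
  have hi0j₀ : i0 ≤ j₀ := hi0min j₀ (by
    rw [Finset.mem_filter]
    exact ⟨Finset.mem_univ _, Fin.lt_def.2 (by omega)⟩)
  have h0p : i0 < p := lt_of_le_of_lt hi0j₀ hj₀
  refine ⟨![i0, p, i2], ⟨h0p, hpi2, hv0p, hcnt i2 hpi2, ?_, ?_⟩, rfl⟩
  · intro j hj
    have hjnot : ¬ π j < π p := by
      intro hh
      have := hi0min j (by rw [Finset.mem_filter]; exact ⟨Finset.mem_univ _, hh⟩)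
      exact absurd (lt_of_le_of_lt this hj) (lt_irrefl _)
    have hne : j ≠ p := fun h => by
      rw [h] at hj
      exact absurd (hj.trans h0p) (lt_irrefl _)
    exact lt_of_le_of_ne (not_lt.1 hjnot) (π.injective.ne (Ne.symm hne))
  · intro j hj hne
    have := hi2min j (by rw [Finset.mem_filter]; exact ⟨Finset.mem_univ _, hj⟩)
    exact lt_of_le_of_ne this (π.injective.ne (Ne.symm hne))

lemma occ1_eq_statA (π : Equiv.Perm (Fin n)) : occ perm123 Sset π = statA π := by
  have e : Nat.card {i : Fin 3 → Fin n // IsMeshOcc perm123 Sset π i}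
      = Nat.card {p : Fin n // pA π p} := by
    apply Nat.card_eq_of_bijective
      (fun x => (⟨x.1 1, occ1_mid ((mesh1_iff π x.1).1 x.2)⟩ : {p : Fin n // pA π p}))
    constructor
    · rintro ⟨i, hi⟩ ⟨i', hi'⟩ h
      simp only [Subtype.mk.injEq] at h ⊢
      exact occ1_inj i i' ((mesh1_iff π i).1 hi) ((mesh1_iff π i').1 hi') h
    · rintro ⟨p, hp⟩
      obtain ⟨i, hocc, hi1⟩ := occ1_surj p hp
      exact ⟨⟨i, (mesh1_iff π i).2 hocc⟩, Subtype.ext hi1⟩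
  rw [occ, e, Nat.card_eq_fintype_card, Fintype.card_subtype]
  rfl

end OccEq
section OccEq2

open Finset

variable {n : ℕ}

lemma occ2_mid {π : Equiv.Perm (Fin n)} {i : Fin 3 → Fin n} (h : Occ2 π i) : pB π (i 1) := by
  obtain ⟨h01, h12, hv02, hv21, hlow, hhigh⟩ := h
  have hpos : 0 < n := (i 0).pos
  constructor
  · unfold cnt
    have hset : (univ.filter (fun j => i 1 < j ∧ π j < π (i 1))) = {i 2} := by
      ext j
      rw [Finset.mem_filter, Finset.mem_singleton]
      constructor
      · rintro ⟨-, hj, hlt⟩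
        by_contra hne
        exact absurd hlt (lt_asymm (hhigh j hj hne))
      · rintro rfl
        exact ⟨Finset.mem_univ _, h12, hv21⟩
    rw [hset, Finset.card_singleton]
  · set z : Fin n := ⟨0, hpos⟩ with hz
    refine ⟨π.symm z, ?_, ?_⟩
    · have h0 : π (π.symm z) = z := π.apply_symm_apply z
      have hne : π.symm z ≠ i 1 := by
        intro h
        rw [h] at h0
        have := Fin.lt_def.1 hv21
        rw [h0] at this
        simp [hz] at this
      by_contra hnotlt
      have hgt : i 1 < π.symm z := lt_of_le_of_ne (not_lt.1 hnotlt) (Ne.symm hne)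
      by_cases h2 : π.symm z = i 2
      · rw [h2] at h0
        have := Fin.lt_def.1 hv02
        rw [h0] at this
        simp [hz] at this
      · have hh := hhigh _ hgt h2
        rw [h0] at hh
        have := Fin.lt_def.1 hh
        simp [hz] at this
    · rw [π.apply_symm_apply]

lemma occ2_inj {π : Equiv.Perm (Fin n)} (i i' : Fin 3 → Fin n)
    (h : Occ2 π i) (h' : Occ2 π i') (hmid : i 1 = i' 1) : i = i' := by
  obtain ⟨h01, h12, hv02, hv21, hlow, hhigh⟩ := h
  obtain ⟨h01', h12', hv02', hv21', hlow', hhigh'⟩ := h'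
  have h22 : i 2 = i' 2 := by
    by_contra hne
    have ha : π (i 1) < π (i' 2) := by
      apply hhigh
      · rw [hmid]; exact h12'
      · exact fun hh => hne hh.symm
    rw [hmid] at ha
    exact absurd (ha.trans hv21') (lt_irrefl _)
  have h00 : i 0 = i' 0 := by
    rcases lt_trichotomy (i 0) (i' 0) with hlt | heq | hgt
    · exfalso
      have := hlow' (i 0) hlt
      rw [← h22] at this
      exact absurd (hv02.trans this) (lt_irrefl _)
    · exact heq
    · exfalso
      have := hlow (i' 0) hgt
      rw [h22] at this
      exact absurd (hv02'.trans this) (lt_irrefl _)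
  funext a
  fin_cases a
  · exact h00
  · exact hmid
  · exact h22

lemma occ2_surj {π : Equiv.Perm (Fin n)} (p : Fin n) (hp : pB π p) :
    ∃ i : Fin 3 → Fin n, Occ2 π i ∧ i 1 = p := by
  obtain ⟨hp2, j₀, hj₀, hj₀0⟩ := hp
  unfold cnt at hp2
  obtain ⟨i2, hset⟩ := Finset.card_eq_one.1 hp2
  have hi2mem : i2 ∈ univ.filter (fun j => p < j ∧ π j < π p) := by
    rw [hset]; exact Finset.mem_singleton_self i2
  rw [Finset.mem_filter] at hi2mem
  obtain ⟨-, hpi2, hv2p⟩ := hi2mem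
  have huniq : ∀ j, p < j → π j < π p → j = i2 := by
    intro j hj hlt
    have : j ∈ univ.filter (fun j => p < j ∧ π j < π p) := by
      rw [Finset.mem_filter]; exact ⟨Finset.mem_univ _, hj, hlt⟩
    rw [hset, Finset.mem_singleton] at this
    exact this
  have hi2pos : (π i2 : ℕ) ≠ 0 := by
    intro h0
    have : π j₀ = π i2 := Fin.ext (by omega)
    have := π.injective this
    subst this
    exact absurd (hj₀.trans hpi2) (lt_irrefl _)
  have hTl : (univ.filter (fun j : Fin n => π j < π i2)).Nonempty :=
    ⟨j₀, by
      rw [Finset.mem_filter]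
      exact ⟨Finset.mem_univ _, Fin.lt_def.2 (by omega)⟩⟩
  obtain ⟨i0, hi0mem, hi0min⟩ := Finset.exists_min_image _ (fun j => j) hTl
  rw [Finset.mem_filter] at hi0mem
  have hv02 : π i0 < π i2 := hi0mem.2
  have hi0j₀ : i0 ≤ j₀ := hi0min j₀ (by
    rw [Finset.mem_filter]
    exact ⟨Finset.mem_univ _, Fin.lt_def.2 (by omega)⟩)
  have h0p : i0 < p := lt_of_le_of_lt hi0j₀ hj₀
  refine ⟨![i0, p, i2], ⟨h0p, hpi2, hv02, hv2p, ?_, ?_⟩, rfl⟩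
  · intro j hj
    have hjnot : ¬ π j < π i2 := by
      intro hh
      have := hi0min j (by rw [Finset.mem_filter]; exact ⟨Finset.mem_univ _, hh⟩)
      exact absurd (lt_of_le_of_lt this hj) (lt_irrefl _)
    have hne : j ≠ i2 := fun h => by
      rw [h] at hj
      exact absurd ((hj.trans h0p).trans hpi2) (lt_irrefl _)
    exact lt_of_le_of_ne (not_lt.1 hjnot) (π.injective.ne (Ne.symm hne))
  · intro j hj hne
    have hjnot : ¬ π j < π p := fun hh => hne (huniq j hj hh)
    have hnep : j ≠ p := fun h => absurd (h ▸ hj) (lt_irrefl _)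
    exact lt_of_le_of_ne (not_lt.1 hjnot) (π.injective.ne (Ne.symm hnep))

lemma occ2_eq_statB (π : Equiv.Perm (Fin n)) : occ perm132 Sset π = statB π := by
  have e : Nat.card {i : Fin 3 → Fin n // IsMeshOcc perm132 Sset π i}
      = Nat.card {p : Fin n // pB π p} := by
    apply Nat.card_eq_of_bijective
      (fun x => (⟨x.1 1, occ2_mid ((mesh2_iff π x.1).1 x.2)⟩ : {p : Fin n // pB π p}))
    constructor
    · rintro ⟨i, hi⟩ ⟨i', hi'⟩ h
      simp only [Subtype.mk.injEq] at h ⊢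
      exact occ2_inj i i' ((mesh2_iff π i).1 hi) ((mesh2_iff π i').1 hi') h
    · rintro ⟨p, hp⟩
      obtain ⟨i, hocc, hi1⟩ := occ2_surj p hp
      exact ⟨⟨i, (mesh2_iff π i).2 hocc⟩, Subtype.ext hi1⟩
  rw [occ, e, Nat.card_eq_fintype_card, Fintype.card_subtype]
  rfl

end OccEq2

section Assemble

open Finset

lemma card_eq_Fcnt (n k ℓ : ℕ) :
    Nat.card {π : Equiv.Perm (Fin n) //
      occ perm123 Sset π = k ∧ occ perm132 Sset π = ℓ} = Fcnt n k ℓ := by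
  have e : Nat.card {π : Equiv.Perm (Fin n) //
      occ perm123 Sset π = k ∧ occ perm132 Sset π = ℓ}
      = Nat.card {π : Equiv.Perm (Fin n) // statA π = k ∧ statB π = ℓ} := by
    apply Nat.card_congr
    apply Equiv.subtypeEquivRight
    intro π
    rw [occ1_eq_statA, occ2_eq_statB]
  rw [e, Nat.card_eq_fintype_card, Fintype.card_subtype]
  rfl


theorem statement_17 :
    (∀ n : ℕ, 2 ≤ n → ∀ k ℓ : ℕ,
      (k = 0 ∧ ℓ = 0 →
        Nat.card {π : Equiv.Perm (Fin n) //
            occ perm123 ({(0, 0), (0, 1), (2, 0), (2, 1), (2, 2), (3, 0), (3, 1), (3, 2)} : Set (ℕ × ℕ)) π = k ∧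
            occ perm132 ({(0, 0), (0, 1), (2, 0), (2, 1), (2, 2), (3, 0), (3, 1), (3, 2)} : Set (ℕ × ℕ)) π = ℓ} =
          2 * Nat.factorial (n - 1)) ∧
      (¬(k = 0 ∧ ℓ = 0) →
        Nat.card {π : Equiv.Perm (Fin n) //
            occ perm123 ({(0, 0), (0, 1), (2, 0), (2, 1), (2, 2), (3, 0), (3, 1), (3, 2)} : Set (ℕ × ℕ)) π = k ∧
            occ perm132 ({(0, 0), (0, 1), (2, 0), (2, 1), (2, 2), (3, 0), (3, 1), (3, 2)} : Set (ℕ × ℕ)) π = ℓ} =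
          (k + ℓ).choose k *
            ∑ i ∈ Finset.Icc 2 (n - 1),
              (n - 1).choose i * Nat.factorial (n - 1 - i) * stirlingFirst (i - 1) (k + ℓ))) ∧
    JointlyEquidistributed perm123 ({(0, 0), (0, 1), (2, 0), (2, 1), (2, 2), (3, 0), (3, 1), (3, 2)} : Set (ℕ × ℕ))
      perm132 ({(0, 0), (0, 1), (2, 0), (2, 1), (2, 2), (3, 0), (3, 1), (3, 2)} : Set (ℕ × ℕ)) := by
  have hS : ({(0, 0), (0, 1), (2, 0), (2, 1), (2, 2), (3, 0), (3, 1), (3, 2)} : Set (ℕ × ℕ))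
      = Sset := rfl
  constructor
  · intro n hn k ℓ
    obtain ⟨m, rfl⟩ : ∃ m, n = m + 2 := ⟨n - 2, by omega⟩
    constructor
    · rintro ⟨rfl, rfl⟩
      rw [hS, card_eq_Fcnt, show m + 2 - 1 = m + 1 from rfl]
      exact Fclosed00 m
    · intro h
      rw [hS, card_eq_Fcnt, show m + 2 - 1 = m + 1 from rfl]
      exact Fclosedpos m k ℓ h
  · intro n k ℓ
    rw [hS, card_eq_Fcnt, card_eq_Fcnt, Fsym]

end Assemble
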